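/- Let A be a 1-generated F-semilattice that is isomorphic to each of its nontrivial 1-generated subalgebras, say A is generated by a. If s and t are unary terms with s(a) ≠ t(a), then for every element b of A that is not the least element, s(b) ≠ t(b). Consequently the quasi-identity (s(x) = t(x)) → (x = x ∧ y) holds in A, and the two-element F-semilattice does not belong to the quasivariety generated by A. -/
import Mathlib


inductive SLTerm (F : Type) : Type where
  | var : SLTerm F
  | meet : SLTerm F → SLTerm F → SLTerm F
  | act : F → SLTerm F → SLTerm F

/-- Evaluation of a unary term at an element of an `F`-semilattice. -/
def SLTerm.eval {F A : Type} [SemilatticeInf A] [SMul F A] : SLTerm F → A → A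
  | .var, a => a
  | .meet s t, a => s.eval a ⊓ t.eval a
  | .act g t, a => g • t.eval a

inductive SLTermN (F : Type) : Type where
  | var : ℕ → SLTermN F
  | meet : SLTermN F → SLTermN F → SLTermN F
  | act : F → SLTermN F → SLTermN F

def SLTermN.eval {F A : Type} [SemilatticeInf A] [SMul F A] : SLTermN F → (ℕ → A) → A
  | .var n, v => v n
  | .meet s t, v => s.eval v ⊓ t.eval v
  | .act g t, v => g • t.eval v

def SatQI (F : Type) (A : Type) [SemilatticeInf A] [SMul F A]
    (prem : List (SLTermN F × SLTermN F)) (c : SLTermN F × SLTermN F) : Prop :=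
  ∀ v : ℕ → A, (∀ p ∈ prem, p.1.eval v = p.2.eval v) → c.1.eval v = c.2.eval v

/-- `B` belongs to the quasivariety generated by `A`. -/
def InQ (F : Type) (A B : Type) [SemilatticeInf A] [SMul F A]
    [SemilatticeInf B] [SMul F B] : Prop :=
  ∀ prem c, SatQI F A prem c → SatQI F B prem c

/-- `B` belongs to the variety generated by `A`. -/
def InV (F : Type) (A B : Type) [SemilatticeInf A] [SMul F A]
    [SemilatticeInf B] [SMul F B] : Prop :=
  ∀ s t : SLTermN F, (∀ v : ℕ → A, s.eval v = t.eval v) → ∀ v : ℕ → B, s.eval v = t.eval v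

def IsHom (F : Type) {A B : Type} [SemilatticeInf A] [SMul F A] [SemilatticeInf B] [SMul F B]
    (φ : A → B) : Prop :=
  (∀ x y : A, φ (x ⊓ y) = φ x ⊓ φ y) ∧ ∀ (g : F) (x : A), φ (g • x) = g • φ x

/-- The subuniverse of `A` generated by `a`. -/
def genSet (F : Type) {A : Type} [SemilatticeInf A] [SMul F A] (a : A) : Set A :=
  Set.range fun t : SLTerm F => t.eval a

/-- The quasivariety generated by `A` is a minimal quasivariety of `F`-semilattices. -/
def MinGen (F : Type) [CommGroup F] (A : Type) [SemilatticeInf A] [MulAction F A] : Prop :=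
  Nontrivial A ∧
    ∀ (B : Type) [SemilatticeInf B] [MulAction F B],
      (∀ (g : F) (x y : B), g • (x ⊓ y) = g • x ⊓ g • y) →
      InQ F A B → Nontrivial B → InQ F B A

section Aux

variable {F A : Type} [CommGroup F] [SemilatticeInf A] [MulAction F A]

/-- translation of a unary term to a term in many variables, using variable 0. -/
def SLTerm.toN {F : Type} : SLTerm F → SLTermN F
  | .var => .var 0
  | .meet s t => .meet s.toN t.toN
  | .act g t => .act g t.toN

lemma toN_eval (p : SLTerm F) (v : ℕ → A) : p.toN.eval v = p.eval (v 0) := by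
  induction p with
  | var => rfl
  | meet s t hs ht => simp [SLTerm.toN, SLTerm.eval, SLTermN.eval, hs, ht]
  | act g t ht => simp [SLTerm.toN, SLTerm.eval, SLTermN.eval, ht]

lemma smul_mono' (hA : ∀ (g : F) (x y : A), g • (x ⊓ y) = g • x ⊓ g • y) (g : F) {x y : A} (h : x ≤ y) : g • x ≤ g • y := by
  calc g • x = g • (x ⊓ y) := by rw [inf_eq_left.mpr h]
    _ = g • x ⊓ g • y := hA g x y
    _ ≤ g • y := inf_le_right

lemma eval_inf (hA : ∀ (g : F) (x y : A), g • (x ⊓ y) = g • x ⊓ g • y) (p : SLTerm F) (x y : A) :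
    p.eval (x ⊓ y) = p.eval x ⊓ p.eval y := by
  induction p with
  | var => rfl
  | meet s t hs ht =>
      simp only [SLTerm.eval, hs, ht]
      exact inf_inf_inf_comm _ _ _ _
  | act g t ht => simp [SLTerm.eval, ht, hA]

lemma eval_smul (hA : ∀ (g : F) (x y : A), g • (x ⊓ y) = g • x ⊓ g • y) (p : SLTerm F) (g : F) (x : A) :
    p.eval (g • x) = g • p.eval x := by
  induction p with
  | var => rfl
  | meet s t hs ht => simp [SLTerm.eval, hs, ht, hA]
  | act h t ht =>
      simp only [SLTerm.eval, ht, smul_smul, mul_comm]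

lemma eval_comm (hA : ∀ (g : F) (x y : A), g • (x ⊓ y) = g • x ⊓ g • y) (p q : SLTerm F) (x : A) :
    p.eval (q.eval x) = q.eval (p.eval x) := by
  induction p with
  | var => rfl
  | meet s t hs ht =>
      simp only [SLTerm.eval, hs, ht, eval_inf hA]
  | act g t ht =>
      simp only [SLTerm.eval, ht, eval_smul hA]

lemma eval_le_smul (hA : ∀ (g : F) (x y : A), g • (x ⊓ y) = g • x ⊓ g • y) (p : SLTerm F) (x : A) : ∃ g : F, p.eval x ≤ g • x := by
  induction p with
  | var => exact ⟨1, by simp [SLTerm.eval]⟩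
  | meet s t hs ht =>
      obtain ⟨g, hg⟩ := hs
      exact ⟨g, le_trans inf_le_left hg⟩
  | act g t ht =>
      obtain ⟨h, hh⟩ := ht
      exact ⟨g * h, by rw [mul_smul]; exact smul_mono' hA g hh⟩

lemma le_eval_of_forall (hA : ∀ (g : F) (x y : A), g • (x ⊓ y) = g • x ⊓ g • y) (p : SLTerm F) {x y : A} (h : ∀ g : F, y ≤ g • x) :
    y ≤ p.eval x := by
  have key : ∀ (p : SLTerm F) (g : F), y ≤ g • p.eval x := by
    intro p
    induction p with
    | var => exact h
    | meet s t hs ht =>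
        intro g
        simp only [SLTerm.eval, hA]
        exact le_inf (hs g) (ht g)
    | act g' t ht =>
        intro g
        simp only [SLTerm.eval, smul_smul]
        exact ht (g * g')
  simpa using key p 1

lemma hom_eval {φ : A → A} (hφ : IsHom F φ) (p : SLTerm F) (x : A) :
    φ (p.eval x) = p.eval (φ x) := by
  induction p with
  | var => rfl
  | meet s t hs ht => simp [SLTerm.eval, hφ.1, hs, ht]
  | act g t ht => simp [SLTerm.eval, hφ.2, ht]

end Aux

/-- If the `1`-generated `A` is isomorphic to each of its nontrivial `1`-generated
subalgebras and `s(a) ≠ t(a)`, then `s(b) ≠ t(b)` for every non-least `b`; consequently the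
quasi-identity `s(x) = t(x) → x = x ⊓ y` holds in `A` and the two-element `F`-semilattice
is not in the quasivariety generated by `A`. -/
theorem stmt_8 (F : Type) [CommGroup F] (A : Type) [SemilatticeInf A] [MulAction F A]
    (hA : ∀ (g : F) (x y : A), g • (x ⊓ y) = g • x ⊓ g • y)
    (a : A) (hgen : ∀ x : A, ∃ t : SLTerm F, t.eval a = x)
    (hiso : ∀ b : A, (∃ x y : A, x ∈ genSet F b ∧ y ∈ genSet F b ∧ x ≠ y) →
      ∃ φ : A → A, Function.Injective φ ∧ Set.range φ = genSet F b ∧ IsHom F φ)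
    (s t : SLTerm F) (hst : s.eval a ≠ t.eval a) :
    (∀ b : A, ¬ IsBot b → s.eval b ≠ t.eval b) ∧
    (∀ x y : A, s.eval x = t.eval x → x = x ⊓ y) ∧
    (∀ (B : Type) [SemilatticeInf B] [MulAction F B],
      (∃ x y : B, x ≠ y ∧ ∀ z : B, z = x ∨ z = y) →
      (∀ (g : F) (z : B), g • z = z) → ¬ InQ F A B) := by
  have part1 : ∀ b : A, ¬ IsBot b → s.eval b ≠ t.eval b := by
    intro b hb hsb
    by_cases hnt : ∃ x y : A, x ∈ genSet F b ∧ y ∈ genSet F b ∧ x ≠ y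
    · obtain ⟨φ, hinj, hrange, hhom⟩ := hiso b hnt
      have hc : φ a ∈ genSet F b := by
        rw [← hrange]; exact ⟨a, rfl⟩
      obtain ⟨r, hr⟩ := hc
      have key : s.eval (φ a) = t.eval (φ a) := by
        rw [← hr, eval_comm hA s r, eval_comm hA t r, hsb]
      rw [← hom_eval hhom, ← hom_eval hhom] at key
      exact hst (hinj key)
    · push_neg at hnt
      have hall : ∀ x ∈ genSet F b, x = b := fun x hx =>
        hnt x b hx ⟨SLTerm.var, rfl⟩
      have hfix : ∀ g : F, g • b = b := fun g =>
        hall _ ⟨SLTerm.act g SLTerm.var, rfl⟩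
      obtain ⟨v, hv⟩ := hgen b
      obtain ⟨g₀, hg₀⟩ := eval_le_smul hA v a
      rw [hv] at hg₀
      have hk : ∀ k : F, b ≤ k • a := by
        intro k
        have h2 := smul_mono' hA (k * g₀⁻¹) hg₀
        rwa [hfix, smul_smul, mul_assoc, inv_mul_cancel, mul_one] at h2
      apply hb
      intro x
      obtain ⟨w, hw⟩ := hgen x
      rw [← hw]
      exact le_eval_of_forall hA w hk
  have part2 : ∀ x y : A, s.eval x = t.eval x → x = x ⊓ y := by
    intro x y hx
    by_cases hbot : IsBot x
    · exact (inf_eq_left.mpr (hbot y)).symm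
    · exact absurd hx (part1 x hbot)
  refine ⟨part1, part2, ?_⟩
  intro B _ _ hBtwo htriv hQ
  obtain ⟨x, y, hxy, hz⟩ := hBtwo
  have hsat : SatQI F A [(s.toN, t.toN)]
      (SLTermN.var 0, SLTermN.meet (SLTermN.var 0) (SLTermN.var 1)) := by
    intro v hp
    have hpr := hp _ (List.mem_singleton.mpr rfl)
    simp only [toN_eval] at hpr
    simpa [SLTermN.eval] using part2 (v 0) (v 1) hpr
  have hB := hQ _ _ hsat
  have evalB : ∀ (p : SLTerm F) (z : B), p.eval z = z := by
    intro p z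
    induction p with
    | var => rfl
    | meet s t hs ht => simp [SLTerm.eval, hs, ht]
    | act g t ht => simp [SLTerm.eval, ht, htriv]
  rcases hz (x ⊓ y) with h | h
  · have hc := hB (fun n => if n = 0 then y else x) (by
      intro p hp
      simp only [List.mem_singleton] at hp
      subst hp
      simp [toN_eval, evalB])
    simp only [SLTermN.eval] at hc
    norm_num at hc
    exact hxy (le_antisymm (inf_eq_left.mp h) hc)
  · have hc := hB (fun n => if n = 0 then x else y) (by
      intro p hp
      simp only [List.mem_singleton] at hp
      subst hp
      simp [toN_eval, evalB])
    simp only [SLTermN.eval] at hc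
    norm_num at hc
    exact hxy (le_antisymm hc (inf_eq_right.mp h))
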